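/- arXiv:1903.01143 — 4 statements merged into one kernel-verified Lean document; each statement's English description precedes it below -/
import Mathlib

section
/- Let K₁, K₂, N, F be n×n matrices with K₁, K₂ invertible, ‖F K₂⁻¹‖ < 1 and ‖K₁⁻¹ F‖ < 1. Then ‖K₁ (N − (I − F K₂⁻¹)⁻¹ N (I − K₁⁻¹ F)⁻¹)‖ ≤ ‖K₁‖·‖N‖·‖F‖·(‖K₁⁻¹‖ + ‖K₂⁻¹‖/(1 − ‖F‖·‖K₂⁻¹‖)) · 1/(1 − ‖K₁⁻¹‖·‖F‖), provided also ‖F‖·‖K₂⁻¹‖ < 1 and ‖K₁⁻¹‖·‖F‖ < 1. -/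
open scoped Matrix.Norms.L2Operator

lemma U2_norm_one_le {n : Type*} [Fintype n] [DecidableEq n] :
    ‖(1 : Matrix n n ℂ)‖ ≤ 1 := by
  rw [Matrix.cstar_norm_def, map_one]
  exact ContinuousLinearMap.norm_id_le

lemma U2_inv_unit {n : Type*} [Fintype n] [DecidableEq n]
    {t : Matrix n n ℂ} (h : ‖t‖ < 1) : IsUnit (1 - t) :=
  isUnit_one_sub_of_norm_lt_one h

lemma U2_expand (k1 nn f k1i k2i : ℝ) (h2 : 1 - f * k2i ≠ 0) (h1 : 1 - k1i * f ≠ 0) :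
    k1 * nn * f * (k1i + k2i / (1 - f * k2i)) * (1 / (1 - k1i * f)) =
      k1 * ((1 - f * k2i)⁻¹ * (f * k2i)) * (nn * (1 - k1i * f)⁻¹) +
      k1 * nn * (k1i * f * (1 - k1i * f)⁻¹) := by
  field_simp
  ring

lemma U2_inv_le {n : Type*} [Fintype n] [DecidableEq n]
    {t : Matrix n n ℂ} (h : ‖t‖ < 1) : ‖(1 - t)⁻¹‖ ≤ (1 - ‖t‖)⁻¹ := by
  rw [Matrix.nonsing_inv_eq_ringInverse, ← geom_series_eq_inverse t h]
  have h1 : ‖(1 : Matrix n n ℂ)‖ ≤ 1 := U2_norm_one_le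
  have := tsum_geometric_le_of_norm_lt_one t h
  linarith

set_option maxHeartbeats 1000000 in
theorem U2_bound {n : Type*} [Fintype n] [DecidableEq n]
    (K₁ K₂ N F : Matrix n n ℂ) (hK₁ : IsUnit K₁) (hK₂ : IsUnit K₂)
    (h₂ : ‖F * K₂⁻¹‖ < 1) (h₁ : ‖K₁⁻¹ * F‖ < 1)
    (h₂' : ‖F‖ * ‖K₂⁻¹‖ < 1) (h₁' : ‖K₁⁻¹‖ * ‖F‖ < 1) :
    ‖K₁ * (N - (1 - F * K₂⁻¹)⁻¹ * N * (1 - K₁⁻¹ * F)⁻¹)‖ ≤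
      ‖K₁‖ * ‖N‖ * ‖F‖ * (‖K₁⁻¹‖ + ‖K₂⁻¹‖ / (1 - ‖F‖ * ‖K₂⁻¹‖)) *
        (1 / (1 - ‖K₁⁻¹‖ * ‖F‖)) := by
  set A := (1 - F * K₂⁻¹)⁻¹ with hA
  set B := (1 - K₁⁻¹ * F)⁻¹ with hB
  have hAunit : IsUnit (1 - F * K₂⁻¹) := U2_inv_unit h₂
  have hBunit : IsUnit (1 - K₁⁻¹ * F) := U2_inv_unit h₁
  have hAinv : A * (1 - F * K₂⁻¹) = 1 :=
    Matrix.nonsing_inv_mul _ ((Matrix.isUnit_iff_isUnit_det _).mp hAunit)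
  have hBinv : (1 - K₁⁻¹ * F) * B = 1 :=
    Matrix.mul_nonsing_inv _ ((Matrix.isUnit_iff_isUnit_det _).mp hBunit)
  have e1 : A * (F * K₂⁻¹) = A - 1 := by
    have h := hAinv
    rw [mul_sub, mul_one, sub_eq_iff_eq_add] at h
    exact eq_sub_iff_add_eq'.mpr h.symm
  have e2 : K₁⁻¹ * F * B = B - 1 := by
    have h := hBinv
    rw [sub_mul, one_mul, sub_eq_iff_eq_add] at h
    exact eq_sub_iff_add_eq'.mpr h.symm
  have key : K₁ * (N - A * N * B) =
      -(K₁ * (A * (F * K₂⁻¹)) * (N * B)) - (K₁ * N) * (K₁⁻¹ * F * B) := by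
    rw [e1, e2]; noncomm_ring
  have hAle : ‖A‖ ≤ (1 - ‖F‖ * ‖K₂⁻¹‖)⁻¹ := by
    refine le_trans (U2_inv_le h₂) ?_
    apply inv_anti₀ (by linarith)
    have := norm_mul_le F K₂⁻¹
    linarith
  have hBle : ‖B‖ ≤ (1 - ‖K₁⁻¹‖ * ‖F‖)⁻¹ := by
    refine le_trans (U2_inv_le h₁) ?_
    apply inv_anti₀ (by linarith)
    have := norm_mul_le K₁⁻¹ F
    linarith
  have hx : ‖A * (F * K₂⁻¹)‖ ≤ ‖A‖ * (‖F‖ * ‖K₂⁻¹‖) :=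
    (norm_mul_le _ _).trans (mul_le_mul_of_nonneg_left (norm_mul_le _ _) (norm_nonneg _))
  have hy : ‖K₁⁻¹ * F * B‖ ≤ ‖K₁⁻¹‖ * ‖F‖ * ‖B‖ :=
    (norm_mul_le _ _).trans (mul_le_mul_of_nonneg_right (norm_mul_le _ _) (norm_nonneg _))
  have t1 : ‖K₁ * (A * (F * K₂⁻¹)) * (N * B)‖ ≤
      ‖K₁‖ * (‖A‖ * (‖F‖ * ‖K₂⁻¹‖)) * (‖N‖ * ‖B‖) := by
    refine (norm_mul_le _ _).trans ?_
    refine mul_le_mul ((norm_mul_le _ _).trans ?_) (norm_mul_le _ _) (norm_nonneg _)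
      (by positivity)
    exact mul_le_mul_of_nonneg_left hx (norm_nonneg _)
  have t2 : ‖(K₁ * N) * (K₁⁻¹ * F * B)‖ ≤ ‖K₁‖ * ‖N‖ * (‖K₁⁻¹‖ * ‖F‖ * ‖B‖) := by
    refine (norm_mul_le _ _).trans ?_
    exact mul_le_mul (norm_mul_le _ _) hy (norm_nonneg _) (by positivity)
  have main : ‖K₁ * (N - A * N * B)‖ ≤
      ‖K₁‖ * (‖A‖ * (‖F‖ * ‖K₂⁻¹‖)) * (‖N‖ * ‖B‖) +
      ‖K₁‖ * ‖N‖ * (‖K₁⁻¹‖ * ‖F‖ * ‖B‖) := by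
    rw [key]
    refine le_trans (norm_sub_le _ _) ?_
    rw [norm_neg]
    exact add_le_add t1 t2
  refine main.trans ?_
  have hd2 : 0 < 1 - ‖F‖ * ‖K₂⁻¹‖ := by linarith
  have hd1 : 0 < 1 - ‖K₁⁻¹‖ * ‖F‖ := by linarith
  rw [U2_expand _ _ _ _ _ hd2.ne' hd1.ne']
  refine add_le_add ?_ ?_
  · refine mul_le_mul (mul_le_mul_of_nonneg_left
      (mul_le_mul_of_nonneg_right hAle (by positivity)) (norm_nonneg _))
      (mul_le_mul_of_nonneg_left hBle (norm_nonneg _)) (by positivity) (by positivity)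
  · refine mul_le_mul_of_nonneg_left ?_ (by positivity)
    exact mul_le_mul_of_nonneg_left hBle (by positivity)
end

section
/- Let A, N, b, c define a bilinear system with A Hurwitz (all eigenvalues of A have negative real part). For s₁, s₂ ∈ ℂ define the second-order transfer function H₂(s₁,s₂) = c (s₂ I − A)⁻¹ N (s₁ I − A)⁻¹ b, and for a perturbation F define H̃₂ analogously with A replaced by A + F. Assume sup_{ω∈ℝ} ‖(iω I − A)⁻¹‖ < 1 and ‖F‖ < 1. Then sup_{ω₁,ω₂ ∈ ℝ} ‖H₂(iω₁, iω₂) − H̃₂(iω₁, iω₂)‖ ≤ C · ‖F‖ for a constant C depending only on ‖c‖, ‖b‖, ‖N‖, and sup_{ω} ‖(iωI − A)⁻¹‖ (and not on F). -/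
open scoped Matrix.Norms.L2Operator
open Matrix

/-- The resolvent `(s I - A)⁻¹` of a complex square matrix. -/
noncomputable def resolv {n : Type*} [Fintype n] [DecidableEq n]
    (A : Matrix n n ℂ) (s : ℂ) : Matrix n n ℂ :=
  (s • (1 : Matrix n n ℂ) - A)⁻¹

/-- The second-order transfer function `H₂(s₁,s₂) = c (s₂ I − A)⁻¹ N (s₁ I − A)⁻¹ b`
of a bilinear system `(A, N, b, c)` (with real data, evaluated at complex
frequencies). -/
noncomputable def H2 {n : Type*} [Fintype n] [DecidableEq n]
    (A N : Matrix n n ℝ) (b c : n → ℝ) (s₁ s₂ : ℂ) : ℂ :=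
  (fun i => (c i : ℂ)) ⬝ᵥ ((resolv (A.map (Complex.ofReal ·)) s₂ *
      N.map (Complex.ofReal ·) *
      resolv (A.map (Complex.ofReal ·)) s₁) *ᵥ (fun i => (b i : ℂ)))

namespace H2Aux

lemma mul3_le {a1 a2 a3 b1 b2 b3 : ℝ} (h1 : a1 ≤ b1) (h2 : a2 ≤ b2) (h3 : a3 ≤ b3)
    (n2 : 0 ≤ a2) (n3 : 0 ≤ a3) (m1 : 0 ≤ b1) (m2 : 0 ≤ b2) :
    a1 * a2 * a3 ≤ b1 * b2 * b3 :=
  mul_le_mul (mul_le_mul h1 h2 n2 m1) h3 n3 (mul_nonneg m1 m2)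

variable {n : Type*} [Fintype n] [DecidableEq n]

lemma resolv_right (A : Matrix n n ℂ) (s : ℂ) (h : IsUnit (s • (1:Matrix n n ℂ) - A)) :
    (s • (1:Matrix n n ℂ) - A) * resolv A s = 1 :=
  Matrix.mul_nonsing_inv _ ((Matrix.isUnit_iff_isUnit_det _).mp h)

lemma resolv_left (A : Matrix n n ℂ) (s : ℂ) (h : IsUnit (s • (1:Matrix n n ℂ) - A)) :
    resolv A s * (s • (1:Matrix n n ℂ) - A) = 1 :=
  Matrix.nonsing_inv_mul _ ((Matrix.isUnit_iff_isUnit_det _).mp h)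

lemma norm_mul3 (X Y Z : Matrix n n ℂ) : ‖X * Y * Z‖ ≤ ‖X‖ * ‖Y‖ * ‖Z‖ :=
  le_trans (norm_mul_le _ _) (mul_le_mul_of_nonneg_right (norm_mul_le X Y) (norm_nonneg Z))

set_option linter.unusedSectionVars false in
lemma dot_bound (v w : n → ℂ) :
    ‖v ⬝ᵥ w‖ ≤ ‖(WithLp.equiv 2 (n → ℂ)).symm v‖ * ‖(WithLp.equiv 2 (n → ℂ)).symm w‖ := by
  have h1 : v ⬝ᵥ w =
      inner ℂ ((WithLp.equiv 2 (n → ℂ)).symm (star v)) ((WithLp.equiv 2 (n → ℂ)).symm w) := by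
    simp [dotProduct, PiLp.inner_apply, RCLike.inner_apply, WithLp.equiv_symm_apply, PiLp.toLp_apply, mul_comm]
  have h2 : ‖(WithLp.equiv 2 (n → ℂ)).symm (star v)‖ = ‖(WithLp.equiv 2 (n → ℂ)).symm v‖ := by
    simp [EuclideanSpace.norm_eq, WithLp.equiv_symm_apply, PiLp.toLp_apply]
  rw [h1, ← h2]
  exact norm_inner_le_norm _ _

lemma bdd (A : Matrix n n ℂ)
    (hu : ∀ ω : ℝ, IsUnit ((Complex.I * ω) • (1:Matrix n n ℂ) - A)) :
    BddAbove (Set.range fun ω : ℝ => ‖resolv A (Complex.I * ω)‖) := by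
  -- tail bound
  have htail : ∀ ω : ℝ, ‖A‖ + 1 ≤ |ω| → ‖resolv A (Complex.I * ω)‖ ≤ 1 := by
    intro ω hω
    set R := resolv A (Complex.I * ω) with hR
    have h1 : (Complex.I * ω) • R = 1 + A * R := by
      have := resolv_right A (Complex.I * ω) (hu ω)
      rw [sub_mul, smul_mul_assoc, one_mul] at this
      exact eq_add_of_sub_eq this
    have h2 : ‖(Complex.I * (ω:ℂ)) • R‖ = |ω| * ‖R‖ := by
      rw [norm_smul]
      simp
    have hone : ‖(1 : Matrix n n ℂ)‖ ≤ 1 := by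
      rw [Matrix.l2_opNorm_def]
      convert ContinuousLinearMap.norm_id_le (𝕜 := ℂ) (E := EuclideanSpace ℂ n) using 2
      ext x i
      simp [Matrix.toEuclideanLin]
    have h3 : |ω| * ‖R‖ ≤ 1 + ‖A‖ * ‖R‖ := by
      rw [← h2, h1]
      exact le_trans (norm_add_le _ _) (by
        have := norm_mul_le A R
        linarith)
    nlinarith [norm_nonneg R, abs_nonneg ω]
  -- continuity
  have hcont : Continuous fun ω : ℝ => ‖resolv A (Complex.I * ω)‖ := by
    have hc : Continuous fun ω : ℝ => ((Complex.I * ω) • (1:Matrix n n ℂ) - A) := by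
      fun_prop
    refine Continuous.norm ?_
    rw [continuous_iff_continuousAt]
    intro ω
    have h1 : ContinuousAt Ring.inverse ((Complex.I * ω) • (1:Matrix n n ℂ) - A) := by
      have := NormedRing.inverse_continuousAt ((hu ω).unit)
      rwa [IsUnit.unit_spec] at this
    have h2 : ContinuousAt (Ring.inverse ∘ fun x : ℝ =>
        ((Complex.I * x) • (1:Matrix n n ℂ) - A)) ω :=
      ContinuousAt.comp (x := ω) h1 hc.continuousAt
    refine h2.congr ?_
    filter_upwards with x
    simp only [Function.comp]
    rw [resolv, Matrix.nonsing_inv_eq_ringInverse]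
  -- compact part
  obtain ⟨B, hB⟩ := (isCompact_Icc (a := -(‖A‖+1)) (b := ‖A‖+1)).bddAbove_image
    hcont.continuousOn
  refine ⟨max B 1, ?_⟩
  rintro x ⟨ω, rfl⟩
  rcases le_or_gt (|ω|) (‖A‖ + 1) with h | h
  · exact le_max_of_le_left (hB ⟨ω, abs_le.mp h, rfl⟩)
  · exact le_max_of_le_right (htail ω h.le)

end H2Aux

set_option maxHeartbeats 1000000 in
theorem H2_perturbation_bound {n : Type*} [Fintype n] [DecidableEq n]
    (A N : Matrix n n ℝ) (b c : n → ℝ)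
    (hHurwitz : ∀ μ ∈ spectrum ℂ (A.map (Complex.ofReal ·)), μ.re < 0)
    (hres : (⨆ ω : ℝ, ‖resolv (A.map (Complex.ofReal ·)) (Complex.I * ω)‖) < 1) :
    ∃ C : ℝ, ∀ F : Matrix n n ℝ,
      ‖F.map (Complex.ofReal ·)‖ < 1 →
      ∀ ω₁ ω₂ : ℝ,
        ‖H2 A N b c (Complex.I * ω₁) (Complex.I * ω₂) -
            H2 (A + F) N b c (Complex.I * ω₁) (Complex.I * ω₂)‖ ≤
          C * ‖F.map (Complex.ofReal ·)‖ := by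
  classical
  set A' : Matrix n n ℂ := A.map (Complex.ofReal ·) with hA'
  set N' : Matrix n n ℂ := N.map (Complex.ofReal ·) with hN'
  have hu : ∀ ω : ℝ, IsUnit ((Complex.I * ω) • (1:Matrix n n ℂ) - A') := by
    intro ω
    have hnotmem : (Complex.I * ω) ∉ spectrum ℂ A' := by
      intro h
      have := hHurwitz _ h
      simp at this
    rw [spectrum.notMem_iff] at hnotmem
    rwa [Algebra.algebraMap_eq_smul_one] at hnotmem
  have hbdd := H2Aux.bdd A' hu
  set r : ℝ := ⨆ ω : ℝ, ‖resolv A' (Complex.I * ω)‖ with hrdef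
  have hr_le : ∀ ω : ℝ, ‖resolv A' (Complex.I * ω)‖ ≤ r := fun ω => le_ciSup hbdd ω
  have hr0 : 0 ≤ r := le_trans (norm_nonneg _) (hr_le 0)
  have hr1 : r < 1 := hres
  set ρ : ℝ := r / (1 - r) with hρdef
  have h1r : (0:ℝ) < 1 - r := by linarith
  have hρ0 : 0 ≤ ρ := div_nonneg hr0 h1r.le
  have hrρ : r ≤ ρ := by
    rw [hρdef, le_div_iff₀ h1r]
    nlinarith
  set vb : EuclideanSpace ℂ n := (WithLp.equiv 2 (n → ℂ)).symm (fun i => (b i : ℂ)) with hvb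
  set vc : EuclideanSpace ℂ n := (WithLp.equiv 2 (n → ℂ)).symm (fun i => (c i : ℂ)) with hvc
  refine ⟨‖vc‖ * (2 * ρ^3 * ‖N'‖) * ‖vb‖, ?_⟩
  intro F hF ω₁ ω₂
  set F' : Matrix n n ℂ := F.map (Complex.ofReal ·) with hF'
  have hAF : (A + F).map (Complex.ofReal ·) = A' + F' := by
    ext i j; simp [hA', hF']
  -- per-frequency facts
  have key : ∀ ω : ℝ,
      ‖resolv (A' + F') (Complex.I * ω)‖ ≤ ρ ∧
      ‖resolv A' (Complex.I * ω) - resolv (A' + F') (Complex.I * ω)‖ ≤ ρ^2 * ‖F'‖ := by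
    intro ω
    set s : ℂ := Complex.I * ω with hs
    set R : Matrix n n ℂ := resolv A' s with hR
    have hRr : ‖R‖ ≤ r := hr_le ω
    have hFRr : ‖F' * R‖ ≤ r :=
      le_trans (norm_mul_le F' R)
        (by calc ‖F'‖ * ‖R‖ ≤ 1 * ‖R‖ :=
              mul_le_mul_of_nonneg_right hF.le (norm_nonneg R)
          _ = ‖R‖ := one_mul _
          _ ≤ r := hRr)
    have hFR : ‖F' * R‖ < 1 := lt_of_le_of_lt hFRr hr1
    have unit1 : IsUnit (1 - F' * R) := (Units.oneSub _ hFR).isUnit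
    have factor : s • (1:Matrix n n ℂ) - (A' + F') = (1 - F' * R) * (s • 1 - A') := by
      rw [sub_mul, one_mul, mul_assoc, H2Aux.resolv_left A' s (hu ω), mul_one]
      abel
    have hu2 : IsUnit (s • (1:Matrix n n ℂ) - (A' + F')) := by
      rw [factor]; exact unit1.mul (hu ω)
    set Rt : Matrix n n ℂ := resolv (A' + F') s with hRtdef
    have e3 : Rt * (s • (1:Matrix n n ℂ) - (A' + F')) = 1 := H2Aux.resolv_left _ s hu2
    have e2 : (s • (1:Matrix n n ℂ) - A') = (s • (1:Matrix n n ℂ) - (A' + F')) + F' := by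
      abel
    have ident : Rt = R + Rt * (F' * R) := by
      have e1 : Rt * ((s • (1:Matrix n n ℂ) - A') * R) = Rt := by
        rw [H2Aux.resolv_right A' s (hu ω), mul_one]
      calc Rt = Rt * ((s • (1:Matrix n n ℂ) - A') * R) := e1.symm
        _ = Rt * (s • (1:Matrix n n ℂ) - (A' + F')) * R + Rt * (F' * R) := by
            rw [e2]; noncomm_ring
        _ = R + Rt * (F' * R) := by rw [e3, one_mul]
    have h4 : ‖Rt‖ ≤ r + ‖Rt‖ * r := by
      calc ‖Rt‖ = ‖R + Rt * (F' * R)‖ := by rw [← ident]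
        _ ≤ ‖R‖ + ‖Rt * (F' * R)‖ := norm_add_le _ _
        _ ≤ ‖R‖ + ‖Rt‖ * ‖F' * R‖ := by
            have := norm_mul_le Rt (F' * R); linarith
        _ ≤ r + ‖Rt‖ * r := by
            have := mul_le_mul_of_nonneg_left hFRr (norm_nonneg Rt)
            linarith
    have hRtnorm : ‖Rt‖ ≤ ρ := by
      rw [hρdef, le_div_iff₀ h1r]
      nlinarith
    refine ⟨hRtnorm, ?_⟩
    have hdiff : R - Rt = -(Rt * (F' * R)) := by
      conv_lhs => rw [ident]
      abel
    rw [hdiff, norm_neg]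
    calc ‖Rt * (F' * R)‖ ≤ ‖Rt‖ * ‖F' * R‖ := norm_mul_le _ _
      _ ≤ ρ * (‖F'‖ * ‖R‖) := by
          refine mul_le_mul hRtnorm (norm_mul_le F' R) (norm_nonneg _) hρ0
      _ ≤ ρ * (‖F'‖ * ρ) := by
          have : ‖R‖ ≤ ρ := hRr.trans hrρ
          have := mul_le_mul_of_nonneg_left this (norm_nonneg F')
          exact mul_le_mul_of_nonneg_left this hρ0
      _ = ρ^2 * ‖F'‖ := by ring
  obtain ⟨hRt1, hD1⟩ := key ω₁
  obtain ⟨hRt2, hD2⟩ := key ω₂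
  set R₁ := resolv A' (Complex.I * ω₁) with hR₁
  set R₂ := resolv A' (Complex.I * ω₂) with hR₂
  set T₁ := resolv (A' + F') (Complex.I * ω₁) with hT₁
  set T₂ := resolv (A' + F') (Complex.I * ω₂) with hT₂
  have hΔ : ‖R₂ * N' * R₁ - T₂ * N' * T₁‖ ≤ 2 * ρ^3 * ‖N'‖ * ‖F'‖ := by
    have hsplit : R₂ * N' * R₁ - T₂ * N' * T₁ =
        (R₂ - T₂) * N' * R₁ + T₂ * N' * (R₁ - T₁) := by noncomm_ring
    have b1 : ‖(R₂ - T₂) * N' * R₁‖ ≤ (ρ^2 * ‖F'‖) * ‖N'‖ * ρ :=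
      le_trans (H2Aux.norm_mul3 _ _ _)
        (H2Aux.mul3_le hD2 le_rfl ((hr_le ω₁).trans hrρ) (norm_nonneg _) (norm_nonneg _)
          (by positivity) (norm_nonneg _))
    have b2 : ‖T₂ * N' * (R₁ - T₁)‖ ≤ ρ * ‖N'‖ * (ρ^2 * ‖F'‖) :=
      le_trans (H2Aux.norm_mul3 _ _ _)
        (H2Aux.mul3_le hRt2 le_rfl hD1 (norm_nonneg _) (norm_nonneg _) hρ0 (norm_nonneg _))
    calc ‖R₂ * N' * R₁ - T₂ * N' * T₁‖
        = ‖(R₂ - T₂) * N' * R₁ + T₂ * N' * (R₁ - T₁)‖ := by rw [hsplit]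
      _ ≤ ‖(R₂ - T₂) * N' * R₁‖ + ‖T₂ * N' * (R₁ - T₁)‖ := norm_add_le _ _
      _ ≤ (ρ^2 * ‖F'‖) * ‖N'‖ * ρ + ρ * ‖N'‖ * (ρ^2 * ‖F'‖) := by linarith
      _ = 2 * ρ^3 * ‖N'‖ * ‖F'‖ := by ring
  have hH2 : H2 A N b c (Complex.I * ω₁) (Complex.I * ω₂) -
      H2 (A + F) N b c (Complex.I * ω₁) (Complex.I * ω₂) =
      (fun i => (c i : ℂ)) ⬝ᵥ
        ((R₂ * N' * R₁ - T₂ * N' * T₁) *ᵥ (fun i => (b i : ℂ))) := by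
    simp only [H2]
    rw [hAF, ← hA', ← hN', ← hR₁, ← hR₂, ← hT₁, ← hT₂]
    rw [Matrix.sub_mulVec, dotProduct_sub]
  rw [hH2]
  calc ‖(fun i => (c i : ℂ)) ⬝ᵥ ((R₂ * N' * R₁ - T₂ * N' * T₁) *ᵥ (fun i => (b i : ℂ)))‖
      ≤ ‖vc‖ * ‖(WithLp.equiv 2 (n → ℂ)).symm
          ((R₂ * N' * R₁ - T₂ * N' * T₁) *ᵥ (fun i => (b i : ℂ)))‖ :=
        H2Aux.dot_bound _ _
    _ ≤ ‖vc‖ * (‖R₂ * N' * R₁ - T₂ * N' * T₁‖ * ‖vb‖) :=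
        mul_le_mul_of_nonneg_left
          (Matrix.l2_opNorm_mulVec (R₂ * N' * R₁ - T₂ * N' * T₁) vb) (norm_nonneg vc)
    _ ≤ ‖vc‖ * ((2 * ρ^3 * ‖N'‖ * ‖F'‖) * ‖vb‖) :=
        mul_le_mul_of_nonneg_left
          (mul_le_mul_of_nonneg_right hΔ (norm_nonneg vb)) (norm_nonneg vc)
    _ = ‖vc‖ * (2 * ρ^3 * ‖N'‖) * ‖vb‖ * ‖F'‖ := by ring
end

section
/- Let Kⱼ (j = 1,…,M) be invertible n×n matrices, N an n×n matrix, and F with ‖F‖ < 1; assume ‖Kⱼ⁻¹‖ < 1 for all j. Define U_M = K₁ ⋯ K_{M−1} ( N K_{M−1}⁻¹ ⋯ N K₂⁻¹ N − (I − F K_M⁻¹)⁻¹ N K_{M−1}⁻¹ (I − F K_{M−1}⁻¹)⁻¹ ⋯ N K₂⁻¹ (I − F K₂⁻¹)⁻¹ N (I − K₁⁻¹ F)⁻¹ ). Then the recursion U_{M+1} = K₁ ⋯ K_M ( N K_M⁻¹ K_{M−1}⁻¹ ⋯ K₁⁻¹ U_M − F K_{M+1}⁻¹ (I − F K_{M+1}⁻¹)⁻¹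 N K_M⁻¹ (I − F K_M⁻¹)⁻¹ ⋯ N K₂⁻¹ (I − F K₂⁻¹)⁻¹ N (I − K₁⁻¹ F)⁻¹ ) holds, where U_{M+1} is defined by the same formula as U_M with M replaced by M+1. -/
open scoped Matrix.Norms.L2Operator

variable {n : Type*} [Fintype n] [DecidableEq n]

/-- The ordered product `K₁ K₂ ⋯ K_{M−1}` (here `M = j + 2`). -/
noncomputable def Kprod (K : ℕ → Matrix n n ℂ) : ℕ → Matrix n n ℂ
  | 0 => K 1
  | j + 1 => Kprod K j * K (j + 2)

/-- The ordered product `K_{M−1}⁻¹ ⋯ K₂⁻¹ K₁⁻¹` (here `M = j + 2`). -/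
noncomputable def Kiprod (K : ℕ → Matrix n n ℂ) : ℕ → Matrix n n ℂ
  | 0 => (K 1)⁻¹
  | j + 1 => (K (j + 2))⁻¹ * Kiprod K j

/-- The unperturbed chain `N K_{M−1}⁻¹ N K_{M−2}⁻¹ ⋯ N K₂⁻¹ N` (here `M = j + 2`). -/
noncomputable def chainA (K : ℕ → Matrix n n ℂ) (N : Matrix n n ℂ) :
    ℕ → Matrix n n ℂ
  | 0 => N
  | j + 1 => N * (K (j + 2))⁻¹ * chainA K N j

/-- The perturbed chain
`N K_{M−1}⁻¹ (I − F K_{M−1}⁻¹)⁻¹ ⋯ N K₂⁻¹ (I − F K₂⁻¹)⁻¹ N` (here `M = j + 2`). -/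
noncomputable def chainB (K : ℕ → Matrix n n ℂ) (N F : Matrix n n ℂ) :
    ℕ → Matrix n n ℂ
  | 0 => N
  | j + 1 => N * (K (j + 2))⁻¹ * (1 - F * (K (j + 2))⁻¹)⁻¹ * chainB K N F j

/-- The perturbation term `U_M` (here `M = j + 2`):
`U_M = K₁ ⋯ K_{M−1} (chainA − (I − F K_M⁻¹)⁻¹ chainB (I − K₁⁻¹ F)⁻¹)`. -/
noncomputable def Uterm (K : ℕ → Matrix n n ℂ) (N F : Matrix n n ℂ)
    (j : ℕ) : Matrix n n ℂ :=
  Kprod K j * (chainA K N j -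
    (1 - F * (K (j + 2))⁻¹)⁻¹ * chainB K N F j * (1 - (K 1)⁻¹ * F)⁻¹)

theorem Uterm_recursion (K : ℕ → Matrix n n ℂ) (N F : Matrix n n ℂ)
    (hK : ∀ j, IsUnit (K j)) (hKi : ∀ j, ‖(K j)⁻¹‖ < 1) (hF : ‖F‖ < 1)
    (j : ℕ) :
    Uterm K N F (j + 1) =
      Kprod K (j + 1) *
        (N * (K (j + 2))⁻¹ * Kiprod K j * Uterm K N F j -
          F * (K (j + 3))⁻¹ * (1 - F * (K (j + 3))⁻¹)⁻¹ *
            chainB K N F (j + 1) * (1 - (K 1)⁻¹ * F)⁻¹) := by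
  -- `1 - F * (K m)⁻¹` is invertible
  have hdet : ∀ m, IsUnit (1 - F * (K m)⁻¹) := by
    intro m
    have h1 : ‖F * (K m)⁻¹‖ < 1 := by
      refine lt_of_le_of_lt (norm_mul_le _ _) ?_
      nlinarith [norm_nonneg F, norm_nonneg (K m)⁻¹, hKi m, hF]
    exact (Units.oneSub _ h1).isUnit
  -- key resolvent identity
  have key : (1 - F * (K (j + 3))⁻¹)⁻¹
      = 1 + F * (K (j + 3))⁻¹ * (1 - F * (K (j + 3))⁻¹)⁻¹ := by
    have h := Matrix.mul_nonsing_inv _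
      ((Matrix.isUnit_iff_isUnit_det _).mp (hdet (j + 3)))
    have h2 : (1 - F * (K (j + 3))⁻¹) * (1 - F * (K (j + 3))⁻¹)⁻¹
        = (1 - F * (K (j + 3))⁻¹)⁻¹
          - F * (K (j + 3))⁻¹ * (1 - F * (K (j + 3))⁻¹)⁻¹ := by
      noncomm_ring
    rw [h2, sub_eq_iff_eq_add'] at h
    conv_lhs => rw [h]
    exact add_comm _ _
  -- Kiprod is a left inverse of Kprod
  have hKP : ∀ m, Kiprod K m * Kprod K m = 1 := by
    intro m
    induction m with
    | zero => exact Matrix.nonsing_inv_mul _ ((Matrix.isUnit_iff_isUnit_det _).mp (hK 1))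
    | succ m ih =>
      have hm : (K (m + 2))⁻¹ * K (m + 2) = 1 :=
        Matrix.nonsing_inv_mul _ ((Matrix.isUnit_iff_isUnit_det _).mp (hK (m + 2)))
      calc Kiprod K (m + 1) * Kprod K (m + 1)
          = (K (m + 2))⁻¹ * (Kiprod K m * Kprod K m) * K (m + 2) := by
            simp only [Kiprod, Kprod]; noncomm_ring
        _ = 1 := by rw [ih, mul_one, hm]
  have hcancel : ∀ S : Matrix n n ℂ, Kiprod K j * (Kprod K j * S) = S := by
    intro S; rw [← mul_assoc, hKP, one_mul]
  simp only [Uterm, Kprod, chainA, chainB, mul_assoc, hcancel,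
    show j + 1 + 2 = j + 3 from rfl]
  conv_lhs => rw [key]
  generalize chainB K N F j = B
  generalize chainA K N j = A
  generalize Kprod K j = P
  generalize (1 - F * (K (j + 3))⁻¹)⁻¹ = Y
  generalize (1 - F * (K (j + 2))⁻¹)⁻¹ = Z
  generalize (1 - (K 1)⁻¹ * F)⁻¹ = C
  generalize (K (j + 3))⁻¹ = X3
  generalize (K (j + 2))⁻¹ = X2
  generalize K (j + 2) = Q
  noncomm_ring
end

section
/- Let Kⱼ (j = 1,…,M) be invertible n×n matrices, N an n×n matrix, F an n×n matrix with ‖F‖ < 1 and ‖Kⱼ⁻¹‖ < 1 for all j. Define U_M as in the truncated Volterra perturbation term: U_M = K₁ ⋯ K_{M−1} ( N K_{M−1}⁻¹ ⋯ N K₂⁻¹ N − (I − F K_M⁻¹)⁻¹ N K_{M−1}⁻¹ (I − F K_{M−1}⁻¹)⁻¹ ⋯ N K₂⁻¹ (I − F K₂⁻¹)⁻¹ N (I − K₁⁻¹ F)⁻¹ ). Then there exists a constant C_M (depending on M, ‖N‖, ‖Kⱼ‖ and ‖Kⱼ⁻¹‖ but not on F) such that ‖U_M‖ ≤ C_M ·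 ‖F‖. -/
open scoped Matrix.Norms.L2Operator

variable {n : Type*} [Fintype n] [DecidableEq n]

/-! ### Auxiliary lemmas -/

lemma mat_norm_one_le : ‖(1 : Matrix n n ℂ)‖ ≤ 1 := by
  rw [Matrix.cstar_norm_def, map_one]
  exact ContinuousLinearMap.norm_id_le

lemma inv_one_sub_eq {X : Matrix n n ℂ} (h : ‖X‖ < 1) :
    (1 - X)⁻¹ = 1 + X * (1 - X)⁻¹ := by
  have hu : IsUnit (1 - X) := isUnit_one_sub_of_norm_lt_one h
  have h1 : (1 - X) * (1 - X)⁻¹ = 1 :=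
    Matrix.mul_nonsing_inv _ ((Matrix.isUnit_iff_isUnit_det _).mp hu)
  calc (1 - X)⁻¹ = ((1 - X) + X) * (1 - X)⁻¹ := by rw [sub_add_cancel, one_mul]
    _ = (1 - X) * (1 - X)⁻¹ + X * (1 - X)⁻¹ := by rw [add_mul]
    _ = 1 + X * (1 - X)⁻¹ := by rw [h1]

lemma norm_inv_one_sub_le {X : Matrix n n ℂ} (h : ‖X‖ < 1) :
    ‖(1 - X)⁻¹‖ ≤ (1 - ‖X‖)⁻¹ := by
  have h1 : ‖(1 - X)⁻¹‖ ≤ 1 + ‖X‖ * ‖(1 - X)⁻¹‖ := by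
    calc ‖(1 - X)⁻¹‖ = ‖1 + X * (1 - X)⁻¹‖ := by rw [← inv_one_sub_eq h]
      _ ≤ ‖(1 : Matrix n n ℂ)‖ + ‖X * (1 - X)⁻¹‖ := norm_add_le _ _
      _ ≤ 1 + ‖X‖ * ‖(1 - X)⁻¹‖ := by
          gcongr
          · exact mat_norm_one_le
          · exact norm_mul_le _ _
  have hX : (0:ℝ) < 1 - ‖X‖ := by linarith
  have h2 : ‖(1 - X)⁻¹‖ * (1 - ‖X‖) ≤ 1 := by nlinarith
  calc ‖(1 - X)⁻¹‖ = ‖(1 - X)⁻¹‖ * (1 - ‖X‖) * (1 - ‖X‖)⁻¹ := by field_simp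
    _ ≤ 1 * (1 - ‖X‖)⁻¹ := by gcongr
    _ = (1 - ‖X‖)⁻¹ := one_mul _

lemma norm_inv_one_sub_sub_one {X : Matrix n n ℂ} (h : ‖X‖ < 1) :
    ‖(1 - X)⁻¹ - 1‖ ≤ ‖X‖ * (1 - ‖X‖)⁻¹ := by
  have h1 : (1 - X)⁻¹ - 1 = X * (1 - X)⁻¹ := by
    conv_lhs => rw [inv_one_sub_eq h]
    rw [add_sub_cancel_left]
  rw [h1]
  calc ‖X * (1 - X)⁻¹‖ ≤ ‖X‖ * ‖(1 - X)⁻¹‖ := norm_mul_le _ _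
    _ ≤ ‖X‖ * (1 - ‖X‖)⁻¹ := mul_le_mul_of_nonneg_left (norm_inv_one_sub_le h) (norm_nonneg _)

/-- Uniform bounds when `‖X‖ ≤ c < 1`. -/
lemma unit_bounds {X : Matrix n n ℂ} {c : ℝ} (hc : c < 1) (hX : ‖X‖ ≤ c) :
    ‖(1 - X)⁻¹‖ ≤ (1 - c)⁻¹ ∧ ‖(1 - X)⁻¹ - 1‖ ≤ ‖X‖ * (1 - c)⁻¹ := by
  have h : ‖X‖ < 1 := lt_of_le_of_lt hX hc
  have hc0 : (0:ℝ) < 1 - c := by linarith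
  have hmono : (1 - ‖X‖)⁻¹ ≤ (1 - c)⁻¹ := by gcongr
  constructor
  · exact le_trans (norm_inv_one_sub_le h) hmono
  · exact le_trans (norm_inv_one_sub_sub_one h) (by gcongr)

lemma norm_mul3 (a b c : Matrix n n ℂ) : ‖a * b * c‖ ≤ ‖a‖ * ‖b‖ * ‖c‖ :=
  calc ‖a * b * c‖ ≤ ‖a * b‖ * ‖c‖ := norm_mul_le _ _
    _ ≤ ‖a‖ * ‖b‖ * ‖c‖ := by gcongr; exact norm_mul_le _ _

lemma norm_mul4 (a b c d : Matrix n n ℂ) : ‖a * b * c * d‖ ≤ ‖a‖ * ‖b‖ * ‖c‖ * ‖d‖ :=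
  calc ‖a * b * c * d‖ ≤ ‖a * b * c‖ * ‖d‖ := norm_mul_le _ _
    _ ≤ ‖a‖ * ‖b‖ * ‖c‖ * ‖d‖ := by gcongr; exact norm_mul3 _ _ _

/-- Bounds on the right-perturbed resolvent `(1 - F A)⁻¹`. -/
lemma pert_bounds {F A : Matrix n n ℂ} (hF : ‖F‖ < 1) (hA : ‖A‖ < 1) :
    ‖(1 - F * A)⁻¹‖ ≤ (1 - ‖A‖)⁻¹ ∧
      ‖(1 - F * A)⁻¹ - 1‖ ≤ ‖F‖ * (‖A‖ * (1 - ‖A‖)⁻¹) := by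
  have hA0 : (0:ℝ) < 1 - ‖A‖ := by linarith
  have hFA : ‖F * A‖ ≤ ‖A‖ := by
    calc ‖F * A‖ ≤ ‖F‖ * ‖A‖ := norm_mul_le _ _
      _ ≤ 1 * ‖A‖ := by gcongr
      _ = ‖A‖ := one_mul _
  obtain ⟨h1, h2⟩ := unit_bounds hA hFA
  refine ⟨h1, le_trans h2 ?_⟩
  calc ‖F * A‖ * (1 - ‖A‖)⁻¹ ≤ (‖F‖ * ‖A‖) * (1 - ‖A‖)⁻¹ := by
        gcongr
        exact norm_mul_le _ _
    _ = ‖F‖ * (‖A‖ * (1 - ‖A‖)⁻¹) := by ring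

/-- Bounds on the left-perturbed resolvent `(1 - A F)⁻¹`. -/
lemma pert_bounds' {F A : Matrix n n ℂ} (hF : ‖F‖ < 1) (hA : ‖A‖ < 1) :
    ‖(1 - A * F)⁻¹‖ ≤ (1 - ‖A‖)⁻¹ ∧
      ‖(1 - A * F)⁻¹ - 1‖ ≤ ‖F‖ * (‖A‖ * (1 - ‖A‖)⁻¹) := by
  have hA0 : (0:ℝ) < 1 - ‖A‖ := by linarith
  have hFA : ‖A * F‖ ≤ ‖A‖ := by
    calc ‖A * F‖ ≤ ‖A‖ * ‖F‖ := norm_mul_le _ _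
      _ ≤ ‖A‖ * 1 := by gcongr
      _ = ‖A‖ := mul_one _
  obtain ⟨h1, h2⟩ := unit_bounds hA hFA
  refine ⟨h1, le_trans h2 ?_⟩
  calc ‖A * F‖ * (1 - ‖A‖)⁻¹ ≤ (‖A‖ * ‖F‖) * (1 - ‖A‖)⁻¹ := by
        gcongr
        exact norm_mul_le _ _
    _ = ‖F‖ * (‖A‖ * (1 - ‖A‖)⁻¹) := by ring

set_option maxHeartbeats 1600000 in
/-- Uniform bound on the perturbed chain. -/
lemma chainB_bound (K : ℕ → Matrix n n ℂ) (N : Matrix n n ℂ)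
    (hKi : ∀ j, ‖(K j)⁻¹‖ < 1) (j : ℕ) :
    ∃ D : ℝ, 0 ≤ D ∧ ∀ F : Matrix n n ℂ, ‖F‖ < 1 → ‖chainB K N F j‖ ≤ D := by
  induction j with
  | zero => exact ⟨‖N‖, norm_nonneg N, fun F _ => le_rfl⟩
  | succ j ih =>
    obtain ⟨D, hD0, hD⟩ := ih
    have hc := hKi (j + 2)
    have hc0 : (0:ℝ) < 1 - ‖(K (j + 2))⁻¹‖ := by linarith
    refine ⟨‖N‖ * (1 - ‖(K (j + 2))⁻¹‖)⁻¹ * D, by positivity, fun F hF => ?_⟩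
    obtain ⟨hR, -⟩ := pert_bounds (A := (K (j + 2))⁻¹) hF hc
    show ‖N * (K (j + 2))⁻¹ * (1 - F * (K (j + 2))⁻¹)⁻¹ * chainB K N F j‖ ≤ _
    calc ‖N * (K (j + 2))⁻¹ * (1 - F * (K (j + 2))⁻¹)⁻¹ * chainB K N F j‖
        ≤ ‖N‖ * ‖(K (j + 2))⁻¹‖ * ‖(1 - F * (K (j + 2))⁻¹)⁻¹‖ * ‖chainB K N F j‖ :=
          norm_mul4 _ _ _ _
      _ ≤ ‖N‖ * 1 * (1 - ‖(K (j + 2))⁻¹‖)⁻¹ * D := by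
          gcongr <;>
            first
            | assumption
            | exact hD F hF
            | exact hC F hF
            | exact hCd F hF
            | exact norm_mul_le _ _
            | exact norm_mul3 _ _ _
            | exact norm_nonneg _
      _ = ‖N‖ * (1 - ‖(K (j + 2))⁻¹‖)⁻¹ * D := by ring

set_option maxHeartbeats 1600000 in
/-- The difference between the perturbed and unperturbed chains is `O(‖F‖)`. -/
lemma chain_diff_bound (K : ℕ → Matrix n n ℂ) (N : Matrix n n ℂ)
    (hKi : ∀ j, ‖(K j)⁻¹‖ < 1) (j : ℕ) :
    ∃ C : ℝ, 0 ≤ C ∧ ∀ F : Matrix n n ℂ, ‖F‖ < 1 →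
      ‖chainB K N F j - chainA K N j‖ ≤ C * ‖F‖ := by
  induction j with
  | zero =>
    refine ⟨0, le_rfl, fun F hF => ?_⟩
    show ‖N - N‖ ≤ 0 * ‖F‖
    simp
  | succ j ih =>
    obtain ⟨C, hC0, hC⟩ := ih
    obtain ⟨D, hD0, hD⟩ := chainB_bound K N hKi j
    have hc := hKi (j + 2)
    have hc0 : (0:ℝ) < 1 - ‖(K (j + 2))⁻¹‖ := by linarith
    refine ⟨‖N‖ * (‖(K (j + 2))⁻¹‖ * (1 - ‖(K (j + 2))⁻¹‖)⁻¹ * D + C),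
      by positivity, fun F hF => ?_⟩
    obtain ⟨-, hR1⟩ := pert_bounds (A := (K (j + 2))⁻¹) hF hc
    have hid : chainB K N F (j + 1) - chainA K N (j + 1)
        = N * ((K (j + 2))⁻¹ *
          (((1 - F * (K (j + 2))⁻¹)⁻¹ - 1) * chainB K N F j
            + (chainB K N F j - chainA K N j))) := by
      show N * (K (j + 2))⁻¹ * (1 - F * (K (j + 2))⁻¹)⁻¹ * chainB K N F j
          - N * (K (j + 2))⁻¹ * chainA K N j = _
      noncomm_ring
    rw [hid]
    have hinner : ‖((1 - F * (K (j + 2))⁻¹)⁻¹ - 1) * chainB K N F j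
          + (chainB K N F j - chainA K N j)‖
        ≤ (‖(K (j + 2))⁻¹‖ * (1 - ‖(K (j + 2))⁻¹‖)⁻¹ * D + C) * ‖F‖ := by
      calc ‖((1 - F * (K (j + 2))⁻¹)⁻¹ - 1) * chainB K N F j
              + (chainB K N F j - chainA K N j)‖
          ≤ ‖((1 - F * (K (j + 2))⁻¹)⁻¹ - 1) * chainB K N F j‖
              + ‖chainB K N F j - chainA K N j‖ := norm_add_le _ _
        _ ≤ ‖(1 - F * (K (j + 2))⁻¹)⁻¹ - 1‖ * ‖chainB K N F j‖ + C * ‖F‖ := by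
            gcongr <;>
              first
              | assumption
              | exact hD F hF
              | exact hC F hF
              | exact hCd F hF
              | exact norm_mul_le _ _
              | exact norm_mul3 _ _ _
              | exact norm_nonneg _
        _ ≤ (‖F‖ * (‖(K (j + 2))⁻¹‖ * (1 - ‖(K (j + 2))⁻¹‖)⁻¹)) * D + C * ‖F‖ := by
            gcongr <;>
              first
              | assumption
              | exact hD F hF
              | exact hC F hF
              | exact hCd F hF
              | exact norm_mul_le _ _
              | exact norm_mul3 _ _ _
              | exact norm_nonneg _
        _ = (‖(K (j + 2))⁻¹‖ * (1 - ‖(K (j + 2))⁻¹‖)⁻¹ * D + C) * ‖F‖ := by ring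
    calc ‖N * ((K (j + 2))⁻¹ * (((1 - F * (K (j + 2))⁻¹)⁻¹ - 1) * chainB K N F j
            + (chainB K N F j - chainA K N j)))‖
        ≤ ‖N‖ * (‖(K (j + 2))⁻¹‖ * ‖((1 - F * (K (j + 2))⁻¹)⁻¹ - 1) * chainB K N F j
            + (chainB K N F j - chainA K N j)‖) := by
          refine le_trans (norm_mul_le _ _) ?_
          gcongr
          exact norm_mul_le _ _
      _ ≤ ‖N‖ * (1 * ((‖(K (j + 2))⁻¹‖ * (1 - ‖(K (j + 2))⁻¹‖)⁻¹ * D + C) * ‖F‖)) := by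
          gcongr <;>
            first
            | assumption
            | exact hD F hF
            | exact hC F hF
            | exact hCd F hF
            | exact norm_mul_le _ _
            | exact norm_mul3 _ _ _
            | exact norm_nonneg _
      _ = ‖N‖ * (‖(K (j + 2))⁻¹‖ * (1 - ‖(K (j + 2))⁻¹‖)⁻¹ * D + C) * ‖F‖ := by ring

/-- Generic decomposition bound: `a − R b L` in terms of resolvent perturbations. -/
lemma decomp_norm (a b R L : Matrix n n ℂ) {cb dL dR nL Cd f : ℝ}
    (h1 : ‖1 - L‖ ≤ f * dL) (h2 : ‖b - a‖ ≤ Cd * f) (h3 : ‖L‖ ≤ nL)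
    (h4 : ‖1 - R‖ ≤ f * dR) (h5 : ‖b‖ ≤ cb) (hf : 0 ≤ f) :
    ‖a - R * b * L‖ ≤ (‖a‖ * dL + Cd * nL + dR * cb * nL) * f := by
  have hnL : 0 ≤ nL := le_trans (norm_nonneg _) h3
  have hcb : 0 ≤ cb := le_trans (norm_nonneg _) h5
  have hid : a - R * b * L
      = a * (1 - L) + (b - a) * (-L) + (1 - R) * b * L := by noncomm_ring
  rw [hid]
  have t1 : ‖a * (1 - L)‖ ≤ ‖a‖ * (f * dL) := by
    refine le_trans (norm_mul_le _ _) ?_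
    gcongr
  have t2 : ‖(b - a) * (-L)‖ ≤ (Cd * f) * nL := by
    refine le_trans (norm_mul_le _ _) ?_
    rw [norm_neg]
    have hCdf : 0 ≤ Cd * f := le_trans (norm_nonneg _) h2
    exact mul_le_mul h2 h3 (norm_nonneg _) hCdf
  have t3 : ‖(1 - R) * b * L‖ ≤ (f * dR) * cb * nL := by
    refine le_trans (norm_mul3 _ _ _) ?_
    have hfdR : 0 ≤ f * dR := le_trans (norm_nonneg _) h4
    have step : ‖1 - R‖ * ‖b‖ ≤ (f * dR) * cb :=
      mul_le_mul h4 h5 (norm_nonneg _) hfdR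
    exact mul_le_mul step h3 (norm_nonneg _) (by positivity)
  calc ‖a * (1 - L) + (b - a) * (-L) + (1 - R) * b * L‖
      ≤ ‖a * (1 - L) + (b - a) * (-L)‖ + ‖(1 - R) * b * L‖ := norm_add_le _ _
    _ ≤ ‖a * (1 - L)‖ + ‖(b - a) * (-L)‖ + ‖(1 - R) * b * L‖ := by
        gcongr
        exact norm_add_le _ _
    _ ≤ ‖a‖ * (f * dL) + (Cd * f) * nL + (f * dR) * cb * nL := by
        gcongr
    _ = (‖a‖ * dL + Cd * nL + dR * cb * nL) * f := by ring

set_option maxHeartbeats 1600000 in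
theorem Uterm_big_O (K : ℕ → Matrix n n ℂ) (N : Matrix n n ℂ)
    (hK : ∀ j, IsUnit (K j)) (hKi : ∀ j, ‖(K j)⁻¹‖ < 1) (j : ℕ) :
    ∃ C : ℝ, ∀ F : Matrix n n ℂ, ‖F‖ < 1 →
      ‖Uterm K N F j‖ ≤ C * ‖F‖ := by
  obtain ⟨D, hD0, hD⟩ := chainB_bound K N hKi j
  obtain ⟨Cd, hCd0, hCd⟩ := chain_diff_bound K N hKi j
  have hc1 := hKi 1
  have hc2 := hKi (j + 2)
  refine ⟨‖Kprod K j‖ *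
    (‖chainA K N j‖ * (‖(K 1)⁻¹‖ * (1 - ‖(K 1)⁻¹‖)⁻¹)
      + Cd * (1 - ‖(K 1)⁻¹‖)⁻¹
      + ‖(K (j + 2))⁻¹‖ * (1 - ‖(K (j + 2))⁻¹‖)⁻¹ * D * (1 - ‖(K 1)⁻¹‖)⁻¹),
    fun F hF => ?_⟩
  obtain ⟨hRn, hR1⟩ := pert_bounds (A := (K (j + 2))⁻¹) hF hc2
  obtain ⟨hLn, hL1⟩ := pert_bounds' (A := (K 1)⁻¹) hF hc1
  have hmain := decomp_norm (chainA K N j) (chainB K N F j)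
    ((1 - F * (K (j + 2))⁻¹)⁻¹) ((1 - (K 1)⁻¹ * F)⁻¹)
    (by rw [norm_sub_rev]; exact hL1) (hCd F hF) hLn
    (by rw [norm_sub_rev]; exact hR1) (hD F hF) (norm_nonneg F)
  calc ‖Uterm K N F j‖
      ≤ ‖Kprod K j‖ * ‖chainA K N j -
          (1 - F * (K (j + 2))⁻¹)⁻¹ * chainB K N F j * (1 - (K 1)⁻¹ * F)⁻¹‖ :=
        norm_mul_le _ _
    _ ≤ ‖Kprod K j‖ * ((‖chainA K N j‖ * (‖(K 1)⁻¹‖ * (1 - ‖(K 1)⁻¹‖)⁻¹)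
          + Cd * (1 - ‖(K 1)⁻¹‖)⁻¹
          + ‖(K (j + 2))⁻¹‖ * (1 - ‖(K (j + 2))⁻¹‖)⁻¹ * D * (1 - ‖(K 1)⁻¹‖)⁻¹) * ‖F‖) := by
        gcongr
    _ = ‖Kprod K j‖ * (‖chainA K N j‖ * (‖(K 1)⁻¹‖ * (1 - ‖(K 1)⁻¹‖)⁻¹)
          + Cd * (1 - ‖(K 1)⁻¹‖)⁻¹
          + ‖(K (j + 2))⁻¹‖ * (1 - ‖(K (j + 2))⁻¹‖)⁻¹ * D * (1 - ‖(K 1)⁻¹‖)⁻¹) * ‖F‖ := by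
        ring
end
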